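/- arXiv:0912.5287 — 4 statements merged into one kernel-verified Lean document; each statement's English description precedes it below -/
import Mathlib

section
/- Let (μ_k) and (ν_k) be sequences of probability measures with μ_k equivalent to ν_k for every k, and let μ and ν denote the infinite product measures on the product space. If ∏_{k=1}^∞ ρ(μ_k, ν_k) = 0, where ρ denotes the Hellinger affinity, then μ and ν are mutually singular. -/
open MeasureTheory
open scoped ENNReal

section aux
variable {Ω : Type*} [MeasurableSpace Ω]

lemma lintegral_pi_fin_prod {n : ℕ} (νs : Fin n → Measure Ω)
    [∀ i, SigmaFinite (νs i)] (h : Fin n → Ω → ℝ≥0∞) (hm : ∀ i, Measurable (h i)) :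
    ∫⁻ (x : Fin n → Ω), (∏ i, h i (x i)) ∂(Measure.pi νs) = ∏ i, ∫⁻ x, h i x ∂(νs i) := by
  induction n with
  | zero => simp [Measure.pi_univ]
  | succ n ih =>
    have hmp := measurePreserving_piFinSuccAbove νs 0
    have hmeas2 : Measurable fun (y : Fin n → Ω) => ∏ i : Fin n, h i.succ (y i) :=
      Finset.measurable_prod _ fun i _ => (hm i.succ).comp (measurable_pi_apply i)
    have hmeas : Measurable fun p : Ω × (Fin n → Ω) =>
        h 0 p.1 * ∏ i : Fin n, h i.succ (p.2 i) :=
      ((hm 0).comp measurable_fst).mul (hmeas2.comp measurable_snd)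
    calc ∫⁻ (x : Fin (n+1) → Ω), (∏ i, h i (x i)) ∂(Measure.pi νs)
        = ∫⁻ (p : Ω × (Fin n → Ω)), (h 0 p.1 * ∏ i : Fin n, h i.succ (p.2 i))
            ∂((νs 0).prod (Measure.pi fun i => νs ((0 : Fin (n+1)).succAbove i))) := by
          rw [← hmp.map_eq,
            lintegral_map hmeas (MeasurableEquiv.piFinSuccAbove (fun _ => Ω) 0).measurable]
          refine lintegral_congr fun x => ?_
          simp [MeasurableEquiv.piFinSuccAbove_apply, Fin.prod_univ_succ, Fin.zero_succAbove,
            Fin.tail]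
      _ = (∫⁻ x, h 0 x ∂(νs 0)) *
            ∏ i : Fin n, ∫⁻ x, h i.succ x ∂(νs i.succ) := by
          rw [lintegral_prod_mul (hm 0).aemeasurable hmeas2.aemeasurable]
          congr 1
          have := ih (fun i => νs i.succ) (fun i => h i.succ) (fun i => hm i.succ)
          simpa [Fin.zero_succAbove] using this
      _ = ∏ i, ∫⁻ x, h i x ∂(νs i) := (Fin.prod_univ_succ fun i => ∫⁻ x, h i x ∂(νs i)).symm

end aux

/-- `μ` is the infinite product of the measures `μs` on the countable product space:
it gives every measurable cylinder the product of the corresponding measures. -/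
def IsProductMeasure {Ω : Type*} [MeasurableSpace Ω]
    (μ : Measure (ℕ → Ω)) (μs : ℕ → Measure Ω) : Prop :=
  ∀ (s : Finset ℕ) (t : ℕ → Set Ω), (∀ i, MeasurableSet (t i)) →
    μ {f | ∀ i ∈ s, f i ∈ t i} = ∏ i ∈ s, μs i (t i)

section aux2
variable {Ω : Type*} [MeasurableSpace Ω]

lemma map_pi_of_isProductMeasure (νs : ℕ → Measure Ω) [∀ k, SigmaFinite (νs k)]
    {ν : Measure (ℕ → Ω)} (hν : IsProductMeasure ν νs) (n : ℕ) :
    ν.map (fun f (i : Fin n) => f i) = Measure.pi (fun i : Fin n => νs i) := by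
  classical
  refine (Measure.pi_eq (μ := fun i : Fin n => νs i) fun s hs => ?_).symm
  have hmeas : Measurable fun (f : ℕ → Ω) (i : Fin n) => f i :=
    measurable_pi_iff.2 fun i => measurable_pi_apply _
  rw [Measure.map_apply hmeas (MeasurableSet.univ_pi hs)]
  set t : ℕ → Set Ω := fun k => if hk : k < n then s ⟨k, hk⟩ else Set.univ with ht
  have htm : ∀ k, MeasurableSet (t k) := by
    intro k; by_cases hk : k < n <;> simp [ht, hk, hs]
  have hset : (fun f (i : Fin n) => f i) ⁻¹' Set.univ.pi s
      = {f : ℕ → Ω | ∀ i ∈ Finset.range n, f i ∈ t i} := by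
    ext f
    simp only [Set.mem_preimage, Set.mem_univ_pi, Set.mem_setOf_eq, Finset.mem_range]
    constructor
    · intro hf i hi; simpa [ht, hi] using hf ⟨i, hi⟩
    · intro hf i; have := hf i i.isLt; simpa [ht, i.isLt] using this
  rw [hset, hν _ t htm, ← Fin.prod_univ_eq_prod_range fun k => νs k (t k)]
  exact Finset.prod_congr rfl fun i _ => by simp [ht, i.isLt]

lemma lintegral_prod_eval (νs : ℕ → Measure Ω) [∀ k, SigmaFinite (νs k)]
    {ν : Measure (ℕ → Ω)} (hν : IsProductMeasure ν νs) (h : ℕ → Ω → ℝ≥0∞)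
    (hm : ∀ k, Measurable (h k)) (n : ℕ) :
    ∫⁻ f, (∏ k ∈ Finset.range n, h k (f k)) ∂ν
      = ∏ k ∈ Finset.range n, ∫⁻ x, h k x ∂(νs k) := by
  have hmeas : Measurable fun (f : ℕ → Ω) (i : Fin n) => f i :=
    measurable_pi_iff.2 fun i => measurable_pi_apply _
  have hFm : Measurable fun (x : Fin n → Ω) => ∏ i : Fin n, h i (x i) :=
    Finset.measurable_prod _ fun i _ => (hm i).comp (measurable_pi_apply _)
  calc ∫⁻ f, (∏ k ∈ Finset.range n, h k (f k)) ∂ν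
      = ∫⁻ f, (∏ i : Fin n, h i (f i)) ∂ν := by
        refine lintegral_congr fun f => ?_
        exact (Fin.prod_univ_eq_prod_range (fun k => h k (f k)) n).symm
    _ = ∫⁻ (x : Fin n → Ω), (∏ i : Fin n, h i (x i))
          ∂(ν.map (fun f (i : Fin n) => f i)) := (lintegral_map hFm hmeas).symm
    _ = ∏ i : Fin n, ∫⁻ x, h i x ∂(νs i) := by
        rw [map_pi_of_isProductMeasure νs hν n]
        exact lintegral_pi_fin_prod _ _ fun i => hm i
    _ = ∏ k ∈ Finset.range n, ∫⁻ x, h k x ∂(νs k) :=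
        Fin.prod_univ_eq_prod_range (fun k => ∫⁻ x, h k x ∂(νs k)) n

lemma null_of_coord {νs : ℕ → Measure Ω} {ν : Measure (ℕ → Ω)}
    (hν : IsProductMeasure ν νs) (k : ℕ) {N : Set Ω} (hNm : MeasurableSet N)
    (hN : νs k N = 0) : ν {f | f k ∈ N} = 0 := by
  have := hν {k} (fun _ => N) (fun _ => hNm)
  simp only [Finset.mem_singleton, forall_eq, Finset.prod_singleton, hN] at this
  exact this

end aux2

/-- Kakutani's dichotomy (singular case): if `μ_k ∼ ν_k` are equivalent probability measures
for all `k` and the infinite product of the Hellinger affinities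
`ρ(μ_k, ν_k) = ∫ √(dμ_k/dν_k) dν_k` is `0`, then the infinite product measures are
mutually singular. -/
theorem stmt4 {Ω : Type*} [MeasurableSpace Ω] (μs νs : ℕ → Measure Ω)
    (hμp : ∀ k, IsProbabilityMeasure (μs k)) (hνp : ∀ k, IsProbabilityMeasure (νs k))
    (hequiv : ∀ k, μs k ≪ νs k ∧ νs k ≪ μs k)
    (hρ : Filter.Tendsto
      (fun n => ∏ k ∈ Finset.range n,
        ∫ x, Real.sqrt ((μs k).rnDeriv (νs k) x).toReal ∂(νs k))
      Filter.atTop (nhds 0))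
    (μ ν : Measure (ℕ → Ω))
    (hμ : IsProductMeasure μ μs) (hν : IsProductMeasure ν νs) :
    μ.MutuallySingular ν := by
  classical
  haveI : ∀ k, IsProbabilityMeasure (μs k) := hμp
  haveI : ∀ k, IsProbabilityMeasure (νs k) := hνp
  set sg : ℕ → Ω → ℝ≥0∞ :=
    fun k x => ENNReal.ofReal (Real.sqrt ((μs k).rnDeriv (νs k) x).toReal) with hsg
  set sh : ℕ → Ω → ℝ≥0∞ :=
    fun k x => ENNReal.ofReal (Real.sqrt ((νs k).rnDeriv (μs k) x).toReal) with hsh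
  have msg : ∀ k, Measurable (sg k) := fun k =>
    ENNReal.measurable_ofReal.comp (Real.continuous_sqrt.measurable.comp
      (ENNReal.measurable_toReal.comp (Measure.measurable_rnDeriv _ _)))
  have msh : ∀ k, Measurable (sh k) := fun k =>
    ENNReal.measurable_ofReal.comp (Real.continuous_sqrt.measurable.comp
      (ENNReal.measurable_toReal.comp (Measure.measurable_rnDeriv _ _)))
  set R : ℕ → ℝ≥0∞ := fun k => ∫⁻ x, sg k x ∂(νs k) with hR
  have hRfin : ∀ k, R k ≠ ∞ := by
    intro k
    have hb : ∀ x, sg k x ≤ 1 + (μs k).rnDeriv (νs k) x := by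
      intro x
      have h0 : (0:ℝ) ≤ ((μs k).rnDeriv (νs k) x).toReal := ENNReal.toReal_nonneg
      have h1 : Real.sqrt ((μs k).rnDeriv (νs k) x).toReal
          ≤ 1 + ((μs k).rnDeriv (νs k) x).toReal := by
        nlinarith [Real.sq_sqrt h0, Real.sqrt_nonneg (((μs k).rnDeriv (νs k) x).toReal)]
      calc sg k x ≤ ENNReal.ofReal (1 + ((μs k).rnDeriv (νs k) x).toReal) :=
            ENNReal.ofReal_le_ofReal h1
        _ = 1 + ENNReal.ofReal (((μs k).rnDeriv (νs k) x).toReal) := by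
            rw [ENNReal.ofReal_add zero_le_one h0, ENNReal.ofReal_one]
        _ ≤ 1 + (μs k).rnDeriv (νs k) x := add_le_add_right ENNReal.ofReal_toReal_le _
    have hle : R k ≤ ∫⁻ x, (1 + (μs k).rnDeriv (νs k) x) ∂(νs k) := lintegral_mono hb
    refine ne_top_of_le_ne_top ?_ hle
    rw [lintegral_add_left measurable_const]
    simp only [lintegral_one, measure_univ]
    exact (ENNReal.add_lt_top.2 ⟨ENNReal.one_lt_top,
      Measure.lintegral_rnDeriv_lt_top _ _⟩).ne
  set P : ℕ → ℝ≥0∞ := fun n => ∏ k ∈ Finset.range n, R k with hP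
  have hPfin : ∀ n, P n ≠ ∞ := fun n =>
    (ENNReal.prod_lt_top fun k _ => (hRfin k).lt_top).ne
  have hρR : ∀ k, ∫ x, Real.sqrt ((μs k).rnDeriv (νs k) x).toReal ∂(νs k) = (R k).toReal := by
    intro k
    have hm1 : Measurable fun x : Ω => Real.sqrt ((μs k).rnDeriv (νs k) x).toReal :=
      (Measure.measurable_rnDeriv (μs k) (νs k)).ennreal_toReal.sqrt
    rw [hR]
    simp only [hsg]
    exact integral_eq_lintegral_of_nonneg_ae
      (Filter.Eventually.of_forall fun x => Real.sqrt_nonneg _) hm1.aestronglyMeasurable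
  have hPto : Filter.Tendsto (fun n => (P n).toReal) Filter.atTop (nhds 0) := by
    have heq : (fun n => (P n).toReal)
        = fun n => ∏ k ∈ Finset.range n,
            ∫ x, Real.sqrt ((μs k).rnDeriv (νs k) x).toReal ∂(νs k) := by
      funext n
      rw [hP, ENNReal.toReal_prod]
      exact Finset.prod_congr rfl fun k _ => (hρR k).symm
    rw [heq]
    exact hρ
  have hchoice : ∀ j : ℕ, ∃ n, (P n).toReal < (4:ℝ)⁻¹ ^ j := fun j =>
    (hPto.eventually_lt_const (by positivity)).exists
  choose φ hφ using hchoice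
  set ε : ℕ → ℝ≥0∞ := fun j => (2:ℝ≥0∞)⁻¹ ^ j with hε
  have hε0 : ∀ j, ε j ≠ 0 := fun j => pow_ne_zero _ (ENNReal.inv_ne_zero.2 (by simp))
  have hεtop : ∀ j, ε j ≠ ∞ := fun j =>
    ENNReal.pow_ne_top (ENNReal.inv_ne_top.2 (by simp))
  have hPφ : ∀ j, P (φ j) ≤ ε j * ε j := by
    intro j
    have h1 : P (φ j) ≤ ENNReal.ofReal ((4:ℝ)⁻¹ ^ j) := by
      rw [← ENNReal.ofReal_toReal (hPfin (φ j))]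
      exact ENNReal.ofReal_le_ofReal (hφ j).le
    refine h1.trans (le_of_eq ?_)
    rw [ENNReal.ofReal_pow (by norm_num), ENNReal.ofReal_inv_of_pos (by norm_num)]
    have h4 : (ENNReal.ofReal 4)⁻¹ = (2:ℝ≥0∞)⁻¹ * 2⁻¹ := by
      rw [← ENNReal.mul_inv (Or.inl (by simp)) (Or.inl (by simp))]
      norm_num
    rw [h4, mul_pow]
  set X : ℕ → (ℕ → Ω) → ℝ≥0∞ := fun n f => ∏ k ∈ Finset.range n, sg k (f k) with hX
  set Y : ℕ → (ℕ → Ω) → ℝ≥0∞ := fun n f => ∏ k ∈ Finset.range n, sh k (f k) with hY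
  have mX : ∀ n, Measurable (X n) := fun n =>
    Finset.measurable_prod _ fun k _ => (msg k).comp (measurable_pi_apply k)
  have mY : ∀ n, Measurable (Y n) := fun n =>
    Finset.measurable_prod _ fun k _ => (msh k).comp (measurable_pi_apply k)
  have hXint : ∀ n, ∫⁻ f, X n f ∂ν = P n := fun n =>
    lintegral_prod_eval νs hν sg msg n
  have hshint : ∀ k, ∫⁻ x, sh k x ∂(μs k) = R k := by
    intro k
    obtain ⟨hac, hca⟩ := hequiv k
    rw [← lintegral_rnDeriv_mul hac (msh k).aemeasurable, hR]
    refine lintegral_congr_ae ?_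
    have hfin : ∀ᵐ x ∂(νs k), (μs k).rnDeriv (νs k) x < ∞ := Measure.rnDeriv_lt_top _ _
    have hpos : ∀ᵐ x ∂(νs k), 0 < (μs k).rnDeriv (νs k) x :=
      hca.ae_le (Measure.rnDeriv_pos hac)
    have hinv : (νs k).rnDeriv (μs k) =ᵐ[νs k]
        fun x => ((μs k).rnDeriv (νs k) x)⁻¹ :=
      hca.ae_le (Measure.inv_rnDeriv hac).symm
    filter_upwards [hfin, hpos, hinv] with x hxfin hxpos hxinv
    have ht : 0 < ((μs k).rnDeriv (νs k) x).toReal :=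
      ENNReal.toReal_pos hxpos.ne' hxfin.ne
    have hshx : sh k x
        = ENNReal.ofReal (Real.sqrt ((μs k).rnDeriv (νs k) x).toReal)⁻¹ := by
      simp only [hsh, hxinv, ENNReal.toReal_inv, Real.sqrt_inv]
    rw [hshx]
    nth_rewrite 1 [← ENNReal.ofReal_toReal hxfin.ne]
    rw [← ENNReal.ofReal_mul ENNReal.toReal_nonneg, hsg]
    congr 1
    nth_rewrite 1 [← Real.mul_self_sqrt ht.le]
    exact mul_inv_cancel_right₀ (Real.sqrt_pos.2 ht).ne' _
  have hYint : ∀ n, ∫⁻ f, Y n f ∂μ = P n := by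
    intro n
    rw [lintegral_prod_eval μs hμ sh msh n, hP]
    exact Finset.prod_congr rfl fun k _ => hshint k
  have hone : ∀ k, ∀ᵐ x ∂(μs k), sh k x * sg k x = 1 := by
    intro k
    obtain ⟨hac, hca⟩ := hequiv k
    have hfin : ∀ᵐ x ∂(μs k), (μs k).rnDeriv (νs k) x < ∞ :=
      hac.ae_le (Measure.rnDeriv_lt_top _ _)
    have hpos : ∀ᵐ x ∂(μs k), 0 < (μs k).rnDeriv (νs k) x := Measure.rnDeriv_pos hac
    have hinv : (νs k).rnDeriv (μs k) =ᵐ[μs k]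
        fun x => ((μs k).rnDeriv (νs k) x)⁻¹ := (Measure.inv_rnDeriv hac).symm
    filter_upwards [hfin, hpos, hinv] with x hxfin hxpos hxinv
    have ht : 0 < ((μs k).rnDeriv (νs k) x).toReal :=
      ENNReal.toReal_pos hxpos.ne' hxfin.ne
    have hs0 : Real.sqrt ((μs k).rnDeriv (νs k) x).toReal ≠ 0 := (Real.sqrt_pos.2 ht).ne'
    simp only [hsh, hsg, hxinv, ENNReal.toReal_inv, Real.sqrt_inv]
    rw [← ENNReal.ofReal_mul (by positivity), inv_mul_cancel₀ hs0, ENNReal.ofReal_one]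
  have hbad : ∀ k, ∃ N : Set Ω, MeasurableSet N ∧ μs k N = 0 ∧
      ∀ x, x ∉ N → sh k x * sg k x = 1 := by
    intro k
    have h0 : μs k {x | ¬ (sh k x * sg k x = 1)} = 0 := ae_iff.1 (hone k)
    obtain ⟨N, hsub, hNm, hN0⟩ := exists_measurable_superset_of_null h0
    exact ⟨N, hNm, hN0, fun x hx => by_contra fun hc => hx (hsub hc)⟩
  choose N hNm hN0 hNprop using hbad
  -- Markov bounds
  have hCν : ∀ j, ν {f | ε j ≤ X (φ j) f} ≤ ε j := by
    intro j
    have h1 := mul_meas_ge_le_lintegral₀ (μ := ν) (mX (φ j)).aemeasurable (ε j)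
    rw [hXint (φ j)] at h1
    exact (ENNReal.mul_le_mul_iff_right (hε0 j) (hεtop j)).1 (h1.trans (hPφ j))
  have hDμ : ∀ j, μ {f | ε j ≤ Y (φ j) f} ≤ ε j := by
    intro j
    have h1 := mul_meas_ge_le_lintegral₀ (μ := μ) (mY (φ j)).aemeasurable (ε j)
    rw [hYint (φ j)] at h1
    exact (ENNReal.mul_le_mul_iff_right (hε0 j) (hεtop j)).1 (h1.trans (hPφ j))
  have htsum : (∑' j, ε j) ≠ ∞ := by
    rw [hε, ENNReal.tsum_geometric]
    simp [ENNReal.one_sub_inv_two]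
  have hνlimsup : ν (Filter.limsup (fun j => {f | ε j ≤ X (φ j) f}) Filter.atTop) = 0 :=
    measure_limsup_atTop_eq_zero
      (ne_top_of_le_ne_top htsum (ENNReal.tsum_le_tsum hCν))
  have hμlimsup : μ (Filter.limsup (fun j => {f | ε j ≤ Y (φ j) f}) Filter.atTop) = 0 :=
    measure_limsup_atTop_eq_zero
      (ne_top_of_le_ne_top htsum (ENNReal.tsum_le_tsum hDμ))
  refine ⟨Filter.limsup (fun j => {f | ε j ≤ Y (φ j) f}) Filter.atTop
      ∪ ⋃ k, {f : ℕ → Ω | f k ∈ N k}, ?_, ?_, ?_⟩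
  · refine MeasurableSet.union ?_ ?_
    · exact MeasurableSet.measurableSet_limsup fun j =>
        measurableSet_le measurable_const (mY (φ j))
    · exact MeasurableSet.iUnion fun k => (hNm k).preimage (measurable_pi_apply k)
  · exact measure_union_null hμlimsup
      (measure_iUnion_null fun k => null_of_coord hμ k (hNm k) (hN0 k))
  · refine measure_mono_null ?_ hνlimsup
    intro f hf
    simp only [Set.mem_compl_iff, Set.mem_union, not_or, Set.mem_iUnion, not_exists,
      Set.mem_setOf_eq] at hf
    obtain ⟨hfD, hfN⟩ := hf
    have hXY : ∀ n, Y n f * X n f = 1 := by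
      intro n
      rw [hX, hY, ← Finset.prod_mul_distrib]
      exact Finset.prod_eq_one fun k _ => hNprop k (f k) (hfN k)
    rw [Filter.mem_limsup_iff_frequently_mem] at hfD ⊢
    rw [Filter.not_frequently] at hfD
    refine Filter.Eventually.frequently ?_
    filter_upwards [hfD, Filter.eventually_ge_atTop 1] with j hj hj1
    have hj' : ¬ ε j ≤ Y (φ j) f := hj
    rw [not_le] at hj'
    show ε j ≤ X (φ j) f
    by_contra hc
    rw [not_le] at hc
    have h1 : (1:ℝ≥0∞) ≤ ε j * ε j := by
      rw [← hXY (φ j)]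
      exact mul_le_mul' hj'.le hc.le
    have h2 : ε j ≤ (2:ℝ≥0∞)⁻¹ := by
      rw [hε]
      calc ((2:ℝ≥0∞)⁻¹) ^ j ≤ 2⁻¹ ^ 1 :=
        pow_le_pow_of_le_one (by positivity) (ENNReal.inv_le_one.2 one_le_two) hj1
      _ = 2⁻¹ := pow_one _
    have h3 : ε j * ε j < 1 :=
      lt_of_le_of_lt (mul_le_mul' h2 h2)
        (by
          rw [← ENNReal.mul_inv (Or.inl (by simp)) (Or.inl (by simp))]
          exact ENNReal.inv_lt_one.2 (by norm_num))
    exact absurd (h1.trans_lt h3) (lt_irrefl _)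
end

section
/- Let f be analytic on the open unit disk with continuous extension to a region, and suppose |∂F/∂z(z)| ≤ C·(1-|z|)^{-(1-σ)} for all z on the line segment l joining two points z₁, z₂ in the disk, where 0 < σ < 1. If the segment l lies in the Stolz region {z : |e^{ix} - z| ≤ 2(1-|z|)}, then |F(z₁) - F(z₂)| ≤ C' · |z₁ - z₂|^σ for a constant C' depending only on C and σ. -/
open Complex intervalIntegral

/-- If `F` is analytic on the open unit disk and `‖F'(z)‖ ≤ C (1-|z|)^{-(1-σ)}` on the
segment `l` joining `z₁` and `z₂`, and `l` lies in the Stolz region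
`{z : |e^{ix} - z| ≤ 2(1-|z|)}` (inside the disk), then `‖F z₁ - F z₂‖ ≤ C' ‖z₁ - z₂‖^σ`
for a constant `C'` depending only on `C` and `σ`. -/
theorem stmt10 (C σ : ℝ) (hC : 0 < C) (hσ0 : 0 < σ) (hσ1 : σ < 1) :
    ∃ C' > (0 : ℝ), ∀ (F : ℂ → ℂ) (x : ℝ) (z₁ z₂ : ℂ),
      DifferentiableOn ℂ F (Metric.ball 0 1) →
      (∀ z ∈ segment ℝ z₁ z₂, ‖z‖ < 1 ∧
        ‖Complex.exp (x * Complex.I) - z‖ ≤ 2 * (1 - ‖z‖) ∧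
        ‖deriv F z‖ ≤ C * (1 - ‖z‖) ^ (-(1 - σ))) →
      ‖F z₁ - F z₂‖ ≤ C' * ‖z₁ - z₂‖ ^ σ := by
  refine ⟨4 * C / σ, by positivity, ?_⟩
  intro F x z₁ z₂ hF hseg
  by_cases hz : z₁ = z₂
  · simp [hz, Real.zero_rpow hσ0.ne']
  set p : ℂ := Complex.exp (x * Complex.I) with hp
  set v : ℂ := z₂ - z₁ with hv
  have hvne : v ≠ 0 := sub_ne_zero.2 (Ne.symm hz)
  set L : ℝ := ‖v‖ with hLdef
  have hL : 0 < L := norm_pos_iff.2 hvne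
  set γ : ℝ → ℂ := fun t => z₁ + t • v with hγ
  have hmem : ∀ t ∈ Set.Icc (0:ℝ) 1, γ t ∈ segment ℝ z₁ z₂ := by
    intro t ht
    rw [segment_eq_image']
    exact ⟨t, ht, rfl⟩
  have hball : ∀ t ∈ Set.Icc (0:ℝ) 1, γ t ∈ Metric.ball (0:ℂ) 1 := fun t ht =>
    mem_ball_zero_iff.2 (hseg _ (hmem t ht)).1
  set c : ℝ := max 0 (1 - ‖p - z₂‖ / L) with hc
  have hc0 : 0 ≤ c := le_max_left _ _
  have hc1 : c ≤ 1 := by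
    apply max_le (by norm_num)
    have : 0 ≤ ‖p - z₂‖ / L := by positivity
    linarith
  -- geometric estimates
  have htri : L ≤ ‖p - z₂‖ + ‖p - z₁‖ := by
    calc L = ‖(z₂ - p) + (p - z₁)‖ := by rw [hLdef, hv]; ring_nf
    _ ≤ ‖z₂ - p‖ + ‖p - z₁‖ := norm_add_le _ _
    _ = ‖p - z₂‖ + ‖p - z₁‖ := by rw [norm_sub_rev]
  have hcL : c * L ≤ ‖p - z₁‖ := by
    have h2 : (L - ‖p - z₂‖) / L ≤ ‖p - z₁‖ / L := (div_le_div_iff_of_pos_right hL).2 (by linarith)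
    have h1 : c ≤ ‖p - z₁‖ / L := by
      refine max_le (by positivity) ?_
      calc 1 - ‖p - z₂‖ / L = (L - ‖p - z₂‖) / L := by field_simp
      _ ≤ ‖p - z₁‖ / L := h2
    exact (le_div_iff₀ hL).1 h1
  have hcL2 : L - c * L ≤ ‖p - z₂‖ := by
    have h1 : 1 - ‖p - z₂‖ / L ≤ c := le_max_right _ _
    have h2 : (1 - ‖p - z₂‖ / L) * L ≤ c * L := by nlinarith
    have h3 : (1 - ‖p - z₂‖ / L) * L = L - ‖p - z₂‖ := by field_simp
    linarith
  have hA : ∀ t ∈ Set.Icc (0:ℝ) 1, t ≤ c → L * (c - t) ≤ ‖p - γ t‖ := by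
    intro t ht htc
    have h1 : ‖p - z₁‖ ≤ ‖p - γ t‖ + ‖γ t - z₁‖ := by
      calc ‖p - z₁‖ = ‖(p - γ t) + (γ t - z₁)‖ := by ring_nf
      _ ≤ _ := norm_add_le _ _
    have h2 : ‖γ t - z₁‖ = t * L := by
      have : γ t - z₁ = t • v := by rw [hγ]; ring_nf
      rw [this, norm_smul, Real.norm_eq_abs, _root_.abs_of_nonneg ht.1]
    nlinarith
  have hB : ∀ t ∈ Set.Icc (0:ℝ) 1, c ≤ t → L * (t - c) ≤ ‖p - γ t‖ := by
    intro t ht htc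
    have h1 : ‖p - z₂‖ ≤ ‖p - γ t‖ + ‖γ t - z₂‖ := by
      calc ‖p - z₂‖ = ‖(p - γ t) + (γ t - z₂)‖ := by ring_nf
      _ ≤ _ := norm_add_le _ _
    have h2 : ‖γ t - z₂‖ = (1 - t) * L := by
      have he : γ t - z₂ = (t - 1) • v := by
        rw [hγ, hv, sub_smul, one_smul]; ring
      rw [he, norm_smul, Real.norm_eq_abs, abs_of_nonpos (by linarith [ht.2]), ← hLdef]
      ring
    nlinarith
  have hgap : ∀ t ∈ Set.Icc (0:ℝ) 1, ‖p - γ t‖ / 2 ≤ 1 - ‖γ t‖ := by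
    intro t ht
    have := (hseg _ (hmem t ht)).2.1
    linarith
  -- derivative of F ∘ γ
  set g' : ℝ → ℂ := fun t => v • deriv F (γ t) with hg'
  have hder : ∀ t ∈ Set.Icc (0:ℝ) 1, HasDerivAt (fun s => F (γ s)) (g' t) t := by
    intro t ht
    have hFd : HasDerivAt F (deriv F (γ t)) (γ t) :=
      (hF.differentiableAt (Metric.isOpen_ball.mem_nhds (hball t ht))).hasDerivAt
    have hγd : HasDerivAt γ v t := by
      simpa [hγ] using ((hasDerivAt_id t).smul_const v).const_add z₁
    exact hFd.scomp t hγd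
  have hγcont : Continuous γ := by fun_prop
  have hdcont : ContinuousOn (deriv F) (Metric.ball (0:ℂ) 1) :=
    ((hF.analyticOnNhd Metric.isOpen_ball).deriv).continuousOn
  have hg'cont : ContinuousOn g' (Set.Icc 0 1) := by
    exact (hdcont.comp hγcont.continuousOn hball).const_smul v
  -- pointwise bounds a.e.
  set K : ℝ := C * L * (L / 2) ^ (σ - 1) with hK
  have hKpos : 0 < K := by
    have : (0:ℝ) < (L / 2) ^ (σ - 1) := Real.rpow_pos_of_pos (by linarith) _
    positivity
  have hexp : -(1 - σ) = σ - 1 := by ring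
  have hbnd : ∀ t ∈ Set.Icc (0:ℝ) 1, ∀ u : ℝ, 0 < u → L * u / 2 ≤ 1 - ‖γ t‖ →
      ‖g' t‖ ≤ K * u ^ (σ - 1) := by
    intro t ht u hu hle
    have hd := (hseg _ (hmem t ht)).2.2
    have hpos : (0:ℝ) < L * u / 2 := by positivity
    have hr : (1 - ‖γ t‖) ^ (-(1 - σ)) ≤ (L * u / 2) ^ (-(1 - σ)) :=
      Real.rpow_le_rpow_of_nonpos hpos hle (by linarith)
    have hsplit : (L * u / 2) ^ (σ - 1) = (L / 2) ^ (σ - 1) * u ^ (σ - 1) := by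
      rw [← Real.mul_rpow (by positivity) hu.le]
      ring_nf
    have hnorm : ‖g' t‖ = L * ‖deriv F (γ t)‖ := by
      rw [hg']; simp [norm_smul, hLdef]
    rw [hnorm, hK]
    calc L * ‖deriv F (γ t)‖ ≤ L * (C * (L * u / 2) ^ (-(1 - σ))) := by
          apply mul_le_mul_of_nonneg_left _ hL.le
          exact hd.trans (mul_le_mul_of_nonneg_left hr hC.le)
    _ = C * L * (L / 2) ^ (σ - 1) * u ^ (σ - 1) := by rw [hexp, hsplit]; ring
  -- first piece : over [0, c]
  have hae_ne : ∀ᵐ t ∂(MeasureTheory.volume.restrict (Set.uIoc (0:ℝ) c)), t ≠ c := by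
    apply MeasureTheory.ae_restrict_of_ae
    rw [MeasureTheory.ae_iff]
    have : {t : ℝ | ¬ t ≠ c} = {c} := by ext t; simp
    rw [this]; exact MeasureTheory.measure_singleton c
  have hsub1 : Set.uIcc (0:ℝ) c ⊆ Set.Icc 0 1 := by
    rw [Set.uIcc_of_le hc0]
    exact Set.Icc_subset_Icc le_rfl hc1
  have hint1 : IntervalIntegrable (fun t => K * (c - t) ^ (σ - 1)) MeasureTheory.volume 0 c := by
    apply IntervalIntegrable.const_mul
    have h := (intervalIntegrable_rpow' (by linarith : (-1:ℝ) < σ - 1)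
      (a := c) (b := 0)).comp_sub_left c
    simpa using h
  have hFTC1 : ∫ t in (0:ℝ)..c, g' t = F (γ c) - F z₁ := by
    have h0 : F (γ 0) = F z₁ := by rw [hγ]; norm_num
    rw [integral_eq_sub_of_hasDerivAt
      (fun t htt => hder t (hsub1 htt))
      ((hg'cont.mono hsub1).intervalIntegrable), h0]
  have hbound1 : ‖F (γ c) - F z₁‖ ≤ K * c ^ σ / σ := by
    rw [← hFTC1]
    have key : ∀ᵐ t ∂(MeasureTheory.volume.restrict (Set.uIoc (0:ℝ) c)),
        ‖g' t‖ ≤ K * (c - t) ^ (σ - 1) := by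
      refine ((MeasureTheory.ae_restrict_mem measurableSet_uIoc).and hae_ne).mono ?_
      rintro t ⟨htm, htne⟩
      rw [Set.uIoc_of_le hc0] at htm
      have ht1 : t ∈ Set.Icc (0:ℝ) 1 := ⟨htm.1.le, htm.2.trans hc1⟩
      have htc : t < c := lt_of_le_of_ne htm.2 htne
      refine hbnd t ht1 (c - t) (by linarith) ?_
      have h1 := hA t ht1 htm.2
      have h2 := hgap t ht1
      linarith
    have := norm_integral_le_abs_of_norm_le key hint1
    refine this.trans ?_
    have hval : ∫ t in (0:ℝ)..c, K * (c - t) ^ (σ - 1) = K * (c ^ σ / σ) := by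
      rw [integral_const_mul]
      congr 1
      rw [integral_comp_sub_left (fun u => u ^ (σ - 1)) c]
      simp only [sub_zero, sub_self]
      rw [integral_rpow (Or.inl (by linarith))]
      rw [Real.zero_rpow (by linarith : σ - 1 + 1 ≠ 0)]
      ring_nf
    rw [hval, _root_.abs_of_nonneg (by positivity)]
    apply le_of_eq; ring
  -- second piece : over [c, 1]
  have hae_ne2 : ∀ᵐ t ∂(MeasureTheory.volume.restrict (Set.uIoc c 1)), t ≠ c := by
    apply MeasureTheory.ae_restrict_of_ae
    rw [MeasureTheory.ae_iff]
    have : {t : ℝ | ¬ t ≠ c} = {c} := by ext t; simp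
    rw [this]; exact MeasureTheory.measure_singleton c
  have hsub2 : Set.uIcc c 1 ⊆ Set.Icc 0 1 := by
    rw [Set.uIcc_of_le hc1]
    exact Set.Icc_subset_Icc hc0 le_rfl
  have hint2 : IntervalIntegrable (fun t => K * (t - c) ^ (σ - 1)) MeasureTheory.volume c 1 := by
    apply IntervalIntegrable.const_mul
    have h := (intervalIntegrable_rpow' (by linarith : (-1:ℝ) < σ - 1)
      (a := 0) (b := 1 - c)).comp_sub_right c
    simpa using h
  have hFTC2 : ∫ t in c..(1:ℝ), g' t = F z₂ - F (γ c) := by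
    have h1 : F (γ 1) = F z₂ := by rw [hγ, hv]; norm_num
    rw [integral_eq_sub_of_hasDerivAt
      (fun t htt => hder t (hsub2 htt))
      ((hg'cont.mono hsub2).intervalIntegrable), h1]
  have hbound2 : ‖F z₂ - F (γ c)‖ ≤ K * (1 - c) ^ σ / σ := by
    rw [← hFTC2]
    have key : ∀ᵐ t ∂(MeasureTheory.volume.restrict (Set.uIoc c 1)),
        ‖g' t‖ ≤ K * (t - c) ^ (σ - 1) := by
      refine ((MeasureTheory.ae_restrict_mem measurableSet_uIoc).and hae_ne2).mono ?_
      rintro t ⟨htm, htne⟩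
      rw [Set.uIoc_of_le hc1] at htm
      have ht1 : t ∈ Set.Icc (0:ℝ) 1 := ⟨hc0.trans htm.1.le, htm.2⟩
      have htc : c < t := htm.1
      refine hbnd t ht1 (t - c) (by linarith) ?_
      have h1 := hB t ht1 htm.1.le
      have h2 := hgap t ht1
      linarith
    have := norm_integral_le_abs_of_norm_le key hint2
    refine this.trans ?_
    have hval : ∫ t in c..(1:ℝ), K * (t - c) ^ (σ - 1) = K * ((1 - c) ^ σ / σ) := by
      rw [integral_const_mul]
      congr 1
      rw [integral_comp_sub_right (fun u => u ^ (σ - 1)) c]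
      simp only [sub_self]
      rw [integral_rpow (Or.inl (by linarith))]
      rw [Real.zero_rpow (by linarith : σ - 1 + 1 ≠ 0)]
      ring_nf
    rw [hval, _root_.abs_of_nonneg (mul_nonneg hKpos.le (div_nonneg
      (Real.rpow_nonneg (by linarith) _) hσ0.le))]
    apply le_of_eq; ring
  -- combine
  have htot : ‖F z₁ - F z₂‖ ≤ 2 * K / σ := by
    have h1 : ‖F z₁ - F z₂‖ ≤ ‖F (γ c) - F z₁‖ + ‖F z₂ - F (γ c)‖ := by
      calc ‖F z₁ - F z₂‖ = ‖(F (γ c) - F z₁) + (F z₂ - F (γ c))‖ := by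
            rw [show (F (γ c) - F z₁) + (F z₂ - F (γ c)) = -(F z₁ - F z₂) by ring, norm_neg]
      _ ≤ _ := norm_add_le _ _
    have hcσ : c ^ σ ≤ 1 := Real.rpow_le_one hc0 hc1 hσ0.le
    have hcσ' : (1 - c) ^ σ ≤ 1 := Real.rpow_le_one (by linarith) (by linarith) hσ0.le
    have h2 : K * c ^ σ / σ ≤ K / σ := by
      gcongr
      nlinarith
    have h3 : K * (1 - c) ^ σ / σ ≤ K / σ := by
      gcongr
      nlinarith
    calc ‖F z₁ - F z₂‖ ≤ K * c ^ σ / σ + K * (1 - c) ^ σ / σ := by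
          linarith [hbound1, hbound2]
    _ ≤ K / σ + K / σ := by linarith
    _ = 2 * K / σ := by ring
  -- final arithmetic : 2K/σ ≤ (4C/σ) L^σ
  have hKle : K ≤ 2 * C * L ^ σ := by
    have hdiv : (L / 2) ^ (σ - 1) = L ^ (σ - 1) / 2 ^ (σ - 1) :=
      Real.div_rpow hL.le (by norm_num : (0:ℝ) ≤ 2) (σ - 1)
    have h2σ : (2:ℝ) ^ (-1 : ℝ) ≤ 2 ^ (σ - 1) :=
      Real.rpow_le_rpow_of_exponent_le one_le_two (by linarith)
    have h2σ' : (1:ℝ) / 2 ≤ 2 ^ (σ - 1) := by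
      rw [Real.rpow_neg_one] at h2σ; linarith
    have h2pos : (0:ℝ) < 2 ^ (σ - 1) := Real.rpow_pos_of_pos two_pos _
    have hLσ : L * L ^ (σ - 1) = L ^ σ := by
      have hne : 1 + (σ - 1) ≠ 0 := by intro h; apply hσ0.ne'; linarith
      rw [← Real.rpow_one_add' hL.le hne]
      congr 1
      ring
    have hLσpos : (0:ℝ) < L ^ (σ - 1) := Real.rpow_pos_of_pos hL _
    have : (L / 2) ^ (σ - 1) ≤ L ^ (σ - 1) * 2 := by
      rw [hdiv, div_le_iff₀ h2pos]
      nlinarith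
    calc K = C * L * (L / 2) ^ (σ - 1) := rfl
    _ ≤ C * L * (L ^ (σ - 1) * 2) := by
          exact mul_le_mul_of_nonneg_left this (by positivity)
    _ = 2 * C * (L * L ^ (σ - 1)) := by ring
    _ = 2 * C * L ^ σ := by rw [hLσ]
  have hLz : ‖z₁ - z₂‖ = L := by rw [hLdef, hv, norm_sub_rev]
  rw [hLz]
  calc ‖F z₁ - F z₂‖ ≤ 2 * K / σ := htot
  _ ≤ 2 * (2 * C * L ^ σ) / σ := by gcongr
  _ = 4 * C / σ * L ^ σ := by ring
end

section
/- Let (w_n) be a Blaschke sequence in the unit disk, i.e., ∑(1-|w_n|) < ∞, and define v(z) = ∑_n (1-|z|²)/|z - w_n/|w_n||² · (1-|w_n|) for |z| < 1. Let y be a point on the unit circle such that |y - w_n/|w_n|| ≥ 4(1-|w_n|) for all n ≥ n₀. Then there is a constant C > 0 such that for every z with |z| < 1 and |y - z/|z|| ≤ 2(1-|z|), the Blaschke product B(z) formed from (w_n) satisfies log|B(z)| ≥ -C·v(z) (modulo the finitely many factors with n < n₀). -/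
open Complex

lemma bl_id (z w : ℂ) :
    ‖(1:ℂ) - (starRingEnd ℂ) w * z‖^2 = ‖w - z‖^2 + (1-‖w‖^2)*(1-‖z‖^2) := by
  have h : ∀ u : ℂ, ‖u‖^2 = u.re^2 + u.im^2 := by
    intro u
    rw [Complex.sq_norm, Complex.normSq_apply]; ring
  simp only [h, Complex.sub_re, Complex.sub_im, Complex.one_re, Complex.one_im,
    Complex.mul_re, Complex.mul_im, Complex.conj_re, Complex.conj_im]
  ring

lemma log_bd (z w : ℂ) (hz : ‖z‖ < 1) (hwlt : ‖w‖ < 1) (hne : w ≠ z) :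
    -((1-‖w‖^2)*(1-‖z‖^2)/(2*‖w-z‖^2)) ≤ Real.log ‖(w - z) / (1 - (starRingEnd ℂ) w * z)‖ := by
  have ha : 0 < ‖w - z‖ := by simpa [sub_eq_zero] using hne
  have hd : 0 < ‖(1:ℂ) - (starRingEnd ℂ) w * z‖ := by
    have h1 : ‖(starRingEnd ℂ) w * z‖ < 1 := by
      rw [norm_mul, RCLike.norm_conj]
      nlinarith [norm_nonneg w, norm_nonneg z]
    have : (1:ℂ) - (starRingEnd ℂ) w * z ≠ 0 := by
      intro h
      rw [sub_eq_zero] at h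
      rw [← h] at h1; simp at h1
    simpa [norm_pos_iff] using this
  set a := ‖w - z‖
  set d := ‖(1:ℂ) - (starRingEnd ℂ) w * z‖
  have hnorm : ‖(w - z) / (1 - (starRingEnd ℂ) w * z)‖ = a / d := by
    rw [norm_div]
  rw [hnorm, Real.log_div (ne_of_gt ha) (ne_of_gt hd)]
  -- -(log d - log a) ≥ -(d²-a²)/(2a²)
  have key : Real.log d - Real.log a ≤ (d^2 - a^2)/(2*a^2) := by
    have h2 : 2*(Real.log d - Real.log a) = Real.log ((d/a)^2) := by
      rw [Real.log_pow, Real.log_div (ne_of_gt hd) (ne_of_gt ha)]; ring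
    have h3 : Real.log ((d/a)^2) ≤ (d/a)^2 - 1 :=
      Real.log_le_sub_one_of_pos (by positivity)
    have h4 : (d/a)^2 - 1 = 2*((d^2 - a^2)/(2*a^2)) := by
      field_simp
    linarith
  have hid : d^2 = a^2 + (1-‖w‖^2)*(1-‖z‖^2) := bl_id z w
  have : Real.log d - Real.log a ≤ (1-‖w‖^2)*(1-‖z‖^2)/(2*a^2) := by
    rw [hid] at key; convert key using 2; ring
  linarith

-- Lipschitz bound for radial projection
lemma proj_lip (z v : ℂ) (hz : z ≠ 0) (hv : v ≠ 0) :
    ‖z/(‖z‖:ℂ) - v/(‖v‖:ℂ)‖ ≤ 2*‖z - v‖/‖v‖ := by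
  have hzn : (0:ℝ) < ‖z‖ := norm_pos_iff.mpr hz
  have hvn : (0:ℝ) < ‖v‖ := norm_pos_iff.mpr hv
  have hzC : ((‖z‖:ℝ):ℂ) ≠ 0 := by exact_mod_cast ne_of_gt hzn
  have hvC : ((‖v‖:ℝ):ℂ) ≠ 0 := by exact_mod_cast ne_of_gt hvn
  have heq : z/(‖z‖:ℂ) - v/(‖v‖:ℂ)
      = (z*((‖v‖:ℂ) - (‖z‖:ℂ)) + (‖z‖:ℂ)*(z - v))/((‖z‖:ℂ)*(‖v‖:ℂ)) := by
    rw [div_sub_div _ _ hzC hvC,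
      show z*(‖v‖:ℂ) - (‖z‖:ℂ)*v = z*((‖v‖:ℂ) - (‖z‖:ℂ)) + (‖z‖:ℂ)*(z - v) from by ring]
  rw [heq, norm_div]
  have hnum : ‖z*((‖v‖:ℂ) - (‖z‖:ℂ)) + (‖z‖:ℂ)*(z - v)‖ ≤ 2*‖z‖*‖z-v‖ := by
    have h1 : ‖z*((‖v‖:ℂ) - (‖z‖:ℂ))‖ = ‖z‖ * |‖v‖ - ‖z‖| := by
      rw [norm_mul]
      congr 1
      rw [← Complex.ofReal_sub, Complex.norm_real, Real.norm_eq_abs]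
    have h2 : |‖v‖ - ‖z‖| ≤ ‖z - v‖ := by
      rw [norm_sub_rev]; exact abs_norm_sub_norm_le v z
    calc ‖z*((‖v‖:ℂ) - (‖z‖:ℂ)) + (‖z‖:ℂ)*(z - v)‖
        ≤ ‖z*((‖v‖:ℂ) - (‖z‖:ℂ))‖ + ‖(‖z‖:ℂ)*(z - v)‖ := norm_add_le _ _
      _ ≤ ‖z‖*‖z-v‖ + ‖z‖*‖z-v‖ := by
          rw [h1, norm_mul, Complex.norm_real, Real.norm_eq_abs, abs_of_pos hzn]
          have := mul_le_mul_of_nonneg_left h2 (le_of_lt hzn)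
          linarith
      _ = 2*‖z‖*‖z-v‖ := by ring
  have hden : ‖((‖z‖:ℝ):ℂ)*((‖v‖:ℝ):ℂ)‖ = ‖z‖*‖v‖ := by
    rw [norm_mul, Complex.norm_real, Complex.norm_real, Real.norm_eq_abs,
      Real.norm_eq_abs, abs_of_pos hzn, abs_of_pos hvn]
  rw [hden]
  rw [div_le_div_iff₀ (by positivity) hvn]
  calc ‖z*((‖v‖:ℂ) - (‖z‖:ℂ)) + (‖z‖:ℂ)*(z - v)‖ * ‖v‖ ≤ (2*‖z‖*‖z-v‖)*‖v‖ :=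
        mul_le_mul_of_nonneg_right hnum (norm_nonneg v)
    _ = 2*‖z-v‖*(‖z‖*‖v‖) := by ring

lemma geom (y z v : ℂ) (hy : ‖y‖ = 1) (hz : ‖z‖ < 1) (hz0 : z ≠ 0)
    (hSt : ‖y - z/(‖z‖:ℂ)‖ ≤ 2*(1-‖z‖)) (hv0 : 0 < ‖v‖) (hv1 : ‖v‖ < 1)
    (hsep : 4*(1-‖v‖) ≤ ‖y - v/(‖v‖:ℂ)‖) :
    ‖z - v/(‖v‖:ℂ)‖ ≤ 4 * ‖z - v‖ := by
  have hvne : v ≠ 0 := norm_pos_iff.mp hv0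
  have hvC : ((‖v‖:ℝ):ℂ) ≠ 0 := by exact_mod_cast ne_of_gt hv0
  have hw' : ‖v/(‖v‖:ℂ)‖ = 1 := by
    rw [norm_div, Complex.norm_real, Real.norm_eq_abs, abs_of_pos hv0,
      div_self (ne_of_gt hv0)]
  -- |v| ≥ 1/2
  have hhalf : (1:ℝ)/2 ≤ ‖v‖ := by
    have : ‖y - v/(‖v‖:ℂ)‖ ≤ 2 := by
      calc ‖y - v/(‖v‖:ℂ)‖ ≤ ‖y‖ + ‖v/(‖v‖:ℂ)‖ := norm_sub_le _ _
        _ = 2 := by rw [hy, hw']; norm_num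
    linarith
  -- projection Lipschitz with |v| ≥ 1/2
  have hlip : ‖z/(‖z‖:ℂ) - v/(‖v‖:ℂ)‖ ≤ 4*‖z - v‖ := by
    have h := proj_lip z v hz0 hvne
    have : 2*‖z-v‖/‖v‖ ≤ 4*‖z-v‖ := by
      rw [div_le_iff₀ hv0]
      nlinarith [norm_nonneg (z-v)]
    linarith
  -- 1 - |z| ≤ (1-|v|) + |z-v|
  have h1z : 1 - ‖z‖ ≤ (1-‖v‖) + ‖z - v‖ := by
    have : ‖v‖ - ‖z‖ ≤ ‖z - v‖ := by
      rw [norm_sub_rev]; exact (abs_le.mp (abs_norm_sub_norm_le v z)).2 |>.trans_eq rfl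
    linarith
  -- chain: 4(1-|v|) ≤ 2(1-|z|) + 4|z-v|
  have hchain : 4*(1-‖v‖) ≤ 2*(1-‖z‖) + 4*‖z-v‖ := by
    have h2 : ‖y - v/(‖v‖:ℂ)‖ ≤ ‖y - z/(‖z‖:ℂ)‖ + ‖z/(‖z‖:ℂ) - v/(‖v‖:ℂ)‖ := by
      have := norm_sub_le_norm_sub_add_norm_sub y (z/(‖z‖:ℂ)) (v/(‖v‖:ℂ))
      exact this
    linarith
  have h3 : 1 - ‖v‖ ≤ 3*‖z - v‖ := by linarith
  -- |v - v/|v|| = 1 - |v|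
  have hvv' : ‖v - v/(‖v‖:ℂ)‖ = 1 - ‖v‖ := by
    have heq : v - v/(‖v‖:ℂ) = v * (((‖v‖:ℂ) - 1)/(‖v‖:ℂ)) := by
      rw [← mul_div_assoc, mul_sub, mul_one, sub_div, mul_div_assoc, div_self hvC, mul_one]
    rw [heq, norm_mul, norm_div, Complex.norm_real, Real.norm_eq_abs, abs_of_pos hv0]
    have : ‖((‖v‖:ℝ):ℂ) - 1‖ = |‖v‖ - 1| := by
      rw [show ((‖v‖:ℝ):ℂ) - 1 = ((‖v‖ - 1 : ℝ):ℂ) by push_cast; ring, Complex.norm_real,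
        Real.norm_eq_abs]
    rw [this, abs_of_neg (by linarith)]
    rw [neg_sub, mul_comm]
    exact div_mul_cancel₀ _ (ne_of_gt hv0)
  calc ‖z - v/(‖v‖:ℂ)‖ ≤ ‖z - v‖ + ‖v - v/(‖v‖:ℂ)‖ := norm_sub_le_norm_sub_add_norm_sub _ _ _
    _ = ‖z - v‖ + (1 - ‖v‖) := by rw [hvv']
    _ ≤ ‖z - v‖ + 3*‖z-v‖ := by linarith
    _ = 4 * ‖z - v‖ := by ring

set_option maxHeartbeats 1000000 in
/-- Lower bound for a Blaschke product in a Stolz region. If `(w_n)` is a Blaschke sequence,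
`v(z) = ∑ (1-|z|²)(1-|w_n|)/|z - w_n/|w_n||²`, and `y` is on the unit circle with
`|y - w_n/|w_n|| ≥ 4(1-|w_n|)` for all `n ≥ n₀`, then there is `C > 0` such that for all
`z` in the Stolz region `|y - z/|z|| ≤ 2(1-|z|)`, the tail of the Blaschke product with
zeros `(w_n)_{n ≥ n₀}` satisfies `log |B(z)| ≥ -C v(z)`. -/
theorem stmt11 (w : ℕ → ℂ) (hw : ∀ n, 0 < ‖w n‖ ∧ ‖w n‖ < 1)
    (hBl : Summable fun n => 1 - ‖w n‖) (y : ℂ) (hy : ‖y‖ = 1) (n₀ : ℕ)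
    (hsep : ∀ n, n₀ ≤ n → 4 * (1 - ‖w n‖) ≤ ‖y - w n / (‖w n‖ : ℂ)‖) :
    ∃ C > (0 : ℝ), ∀ z : ℂ, ‖z‖ < 1 → z ≠ 0 → ‖y - z / (‖z‖ : ℂ)‖ ≤ 2 * (1 - ‖z‖) →
      -C * (∑' n : ℕ, (1 - ‖z‖ ^ 2) / ‖z - w n / (‖w n‖ : ℂ)‖ ^ 2 * (1 - ‖w n‖)) ≤
        ∑' n : {n : ℕ // n₀ ≤ n},
          Real.log ‖(w n - z) / (1 - (starRingEnd ℂ) (w n) * z)‖ := by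
  refine ⟨16, by norm_num, ?_⟩
  intro z hz hz0 hSt
  set g : ℕ → ℝ := fun n => (1 - ‖z‖ ^ 2) / ‖z - w n / (‖w n‖ : ℂ)‖ ^ 2 * (1 - ‖w n‖)
    with hg
  have hz1 : 0 < 1 - ‖z‖ := by linarith
  -- ‖z - w'‖ ≥ 1 - ‖z‖ for each n
  have hlow : ∀ n, 1 - ‖z‖ ≤ ‖z - w n / (‖w n‖ : ℂ)‖ := by
    intro n
    have hw' : ‖w n / (‖w n‖ : ℂ)‖ = 1 := by
      rw [norm_div, Complex.norm_real, Real.norm_eq_abs, abs_of_pos (hw n).1,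
        div_self (ne_of_gt (hw n).1)]
    have := norm_sub_norm_le (w n / (‖w n‖ : ℂ)) z
    rw [hw', norm_sub_rev] at this
    linarith
  have hgnn : ∀ n, 0 ≤ g n := by
    intro n
    have h1 : (0:ℝ) ≤ 1 - ‖z‖ ^ 2 := by nlinarith [norm_nonneg z]
    have h2 : (0:ℝ) ≤ 1 - ‖w n‖ := by linarith [(hw n).2]
    positivity
  have hgsum : Summable g := by
    apply Summable.of_nonneg_of_le hgnn (f := fun n => (1-‖z‖^2)/(1-‖z‖)^2 * (1 - ‖w n‖))
    · intro n
      have h2 : (0:ℝ) ≤ 1 - ‖w n‖ := by linarith [(hw n).2]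
      have h1 : (0:ℝ) ≤ 1 - ‖z‖ ^ 2 := by nlinarith [norm_nonneg z]
      have hd := hlow n
      have : (1 - ‖z‖ ^ 2) / ‖z - w n / (‖w n‖ : ℂ)‖ ^ 2 ≤ (1-‖z‖^2)/(1-‖z‖)^2 := by
        apply div_le_div_of_nonneg_left h1 (by positivity)
        nlinarith
      exact mul_le_mul_of_nonneg_right this h2
    · exact hBl.mul_left _
  by_cases hfs : Summable (fun n : {n : ℕ // n₀ ≤ n} =>
      Real.log ‖(w n - z) / (1 - (starRingEnd ℂ) (w n) * z)‖)
  · -- pointwise bound on the subtype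
    have hpt : ∀ n : {n : ℕ // n₀ ≤ n},
        -16 * g n.val ≤ Real.log ‖(w n - z) / (1 - (starRingEnd ℂ) (w n) * z)‖ := by
      intro ⟨n, hn⟩
      have hgeo := geom y z (w n) hy hz hz0 hSt (hw n).1 (hw n).2 (hsep n hn)
      have hne : w n ≠ z := by
        intro h
        rw [h] at hgeo
        simp only [sub_self] at hgeo
        have := hlow n
        rw [h] at this
        simp only [norm_zero, mul_zero] at hgeo
        linarith
      have hlog := log_bd z (w n) hz (hw n).2 hne
      have hzwpos : 0 < ‖w n - z‖ :=
        norm_pos_iff.mpr (sub_ne_zero.mpr hne)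
      have hbd : (1-‖w n‖^2)*(1-‖z‖^2)/(2*‖w n - z‖^2) ≤ 16 * g n := by
        rw [hg]
        simp only
        have h2 : (0:ℝ) ≤ 1 - ‖w n‖ := by linarith [(hw n).2]
        have h1 : (0:ℝ) ≤ 1 - ‖z‖ ^ 2 := by nlinarith [norm_nonneg z]
        have hq : ‖z - w n / (‖w n‖ : ℂ)‖^2 ≤ 16*‖w n - z‖^2 := by
          rw [norm_sub_rev z (w n)] at hgeo
          nlinarith [norm_nonneg (z - w n / (‖w n‖ : ℂ)), norm_nonneg (w n - z)]
        have hqnn : (0:ℝ) ≤ ‖z - w n / (‖w n‖ : ℂ)‖^2 := sq_nonneg _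
        have hrhs : 16 * ((1 - ‖z‖^2) / ‖z - w n / (‖w n‖ : ℂ)‖^2 * (1-‖w n‖))
            = (16*(1 - ‖z‖^2)*(1-‖w n‖)) / ‖z - w n / (‖w n‖ : ℂ)‖^2 := by ring
        rw [hrhs, div_le_div_iff₀ (by nlinarith [hzwpos]) (by nlinarith [hlow n, hz1])]
        have hww : 1 - ‖w n‖^2 ≤ 2*(1 - ‖w n‖) := by nlinarith [norm_nonneg (w n)]
        have hint1 := mul_le_mul_of_nonneg_left hq (mul_nonneg h1 h2)
        have hint2 := mul_le_mul_of_nonneg_right hww (mul_nonneg h1 hqnn)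
        nlinarith [hint1, hint2]
      linarith
    have hsub : Summable (fun n : {n : ℕ // n₀ ≤ n} => g n.val) := by
      exact hgsum.subtype _
    have h1 : ∑' n : {n : ℕ // n₀ ≤ n}, (-16 * g n.val) ≤
        ∑' n : {n : ℕ // n₀ ≤ n},
          Real.log ‖(w n - z) / (1 - (starRingEnd ℂ) (w n) * z)‖ :=
      Summable.tsum_le_tsum hpt (hsub.mul_left _) hfs
    have h2 : ∑' n : {n : ℕ // n₀ ≤ n}, (-16 * g n.val) = -16 * ∑' n : {n : ℕ // n₀ ≤ n}, g n.val :=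
      tsum_mul_left
    have h3 : ∑' n : {n : ℕ // n₀ ≤ n}, g n.val ≤ ∑' n : ℕ, g n := by
      apply Summable.tsum_le_tsum_of_inj (Subtype.val) Subtype.val_injective
        (fun n _ => hgnn n) (fun n => le_refl _) hsub hgsum
    calc -16 * ∑' n : ℕ, g n ≤ -16 * ∑' n : {n : ℕ // n₀ ≤ n}, g n.val := by linarith
      _ = ∑' n : {n : ℕ // n₀ ≤ n}, (-16 * g n.val) := h2.symm
      _ ≤ _ := h1
  · rw [tsum_eq_zero_of_not_summable hfs]
    have : 0 ≤ ∑' n, g n := tsum_nonneg hgnn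
    nlinarith
end

section
/- Let z be in the closed unit disk with z ≠ 0, and let w_n be in the open unit disk with |y - w_n/|w_n|| ≥ 4(1-|w_n|) and |y - z/|z|| ≤ 2(1-|z|) for a point y on the unit circle. Then there is an absolute constant c > 0 such that |z - w_n| ≥ c·|z - w_n/|w_n||, hence (1-|z|²)(1-|w_n|²)/|z-w_n|² ≤ c'·(1-|z|²)(1-|w_n|)/|z - w_n/|w_n||². -/
/-- There are absolute constants `c, c' > 0` such that: if `y` is on the unit circle,
`z` is in the closed unit disk with `z ≠ 0` and `|y - z/|z|| ≤ 2(1-|z|)`, and `w` is in the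
open unit disk with `w ≠ 0` and `|y - w/|w|| ≥ 4(1-|w|)`, then `|z - w| ≥ c |z - w/|w||`,
hence `(1-|z|²)(1-|w|²)/|z-w|² ≤ c' (1-|z|²)(1-|w|)/|z - w/|w||²`. -/
theorem stmt19 : ∃ c > (0 : ℝ), ∃ c' > (0 : ℝ),
    ∀ y z w : ℂ, ‖y‖ = 1 → ‖z‖ ≤ 1 → z ≠ 0 → ‖y - z / (‖z‖ : ℂ)‖ ≤ 2 * (1 - ‖z‖) →
      ‖w‖ < 1 → w ≠ 0 → 4 * (1 - ‖w‖) ≤ ‖y - w / (‖w‖ : ℂ)‖ →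
      c * ‖z - w / (‖w‖ : ℂ)‖ ≤ ‖z - w‖ ∧
      (1 - ‖z‖ ^ 2) * (1 - ‖w‖ ^ 2) / ‖z - w‖ ^ 2 ≤
        c' * ((1 - ‖z‖ ^ 2) * (1 - ‖w‖) / ‖z - w / (‖w‖ : ℂ)‖ ^ 2) := by
  refine ⟨1/4, by norm_num, 32, by norm_num, ?_⟩
  intro y z w hy hz hz0 hzS hw hw0 hwS
  have hzpos : (0:ℝ) < ‖z‖ := norm_pos_iff.mpr hz0
  have hwpos : (0:ℝ) < ‖w‖ := norm_pos_iff.mpr hw0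
  have hzc : ((‖z‖:ℂ)) ≠ 0 := by exact_mod_cast hzpos.ne'
  have hwc : ((‖w‖:ℂ)) ≠ 0 := by exact_mod_cast hwpos.ne'
  have hcnz : ‖((‖z‖:ℝ) : ℂ)‖ = ‖z‖ := by
    rw [Complex.norm_real, Real.norm_eq_abs, abs_of_nonneg hzpos.le]
  have hcnw : ‖((‖w‖:ℝ) : ℂ)‖ = ‖w‖ := by
    rw [Complex.norm_real, Real.norm_eq_abs, abs_of_nonneg hwpos.le]
  have hzstar : ‖z / (‖z‖:ℂ)‖ = 1 := by
    rw [norm_div, hcnz, div_self hzpos.ne']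
  have hwstar : ‖w / (‖w‖:ℂ)‖ = 1 := by
    rw [norm_div, hcnw, div_self hwpos.ne']
  -- ‖w - w*‖ = 1 - ‖w‖
  have hwb : ‖w - w / (‖w‖:ℂ)‖ = 1 - ‖w‖ := by
    have h : w / (‖w‖:ℂ) * (‖w‖:ℂ) = w := div_mul_cancel₀ w hwc
    have h1 : w - w / (‖w‖:ℂ) = (w / (‖w‖:ℂ)) * ((‖w‖:ℂ) - 1) := by
      calc w - w / (‖w‖:ℂ) = w / (‖w‖:ℂ) * (‖w‖:ℂ) - w / (‖w‖:ℂ) := by rw [h]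
        _ = _ := by ring
    rw [h1, norm_mul, hwstar, one_mul,
      show ((‖w‖:ℂ) - 1) = ((‖w‖ - 1 : ℝ):ℂ) by push_cast; ring,
      Complex.norm_real, Real.norm_eq_abs, abs_of_nonpos (by linarith)]
    ring
  have hza : ‖z - z / (‖z‖:ℂ)‖ = 1 - ‖z‖ := by
    have h : z / (‖z‖:ℂ) * (‖z‖:ℂ) = z := div_mul_cancel₀ z hzc
    have h1 : z - z / (‖z‖:ℂ) = (z / (‖z‖:ℂ)) * ((‖z‖:ℂ) - 1) := by
      calc z - z / (‖z‖:ℂ) = z / (‖z‖:ℂ) * (‖z‖:ℂ) - z / (‖z‖:ℂ) := by rw [h]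
        _ = _ := by ring
    rw [h1, norm_mul, hzstar, one_mul,
      show ((‖z‖:ℂ) - 1) = ((‖z‖ - 1 : ℝ):ℂ) by push_cast; ring,
      Complex.norm_real, Real.norm_eq_abs, abs_of_nonpos (by linarith)]
    ring
  -- ‖w‖ ≥ 1/2
  have hw2 : (1:ℝ)/2 ≤ ‖w‖ := by
    have h1 : ‖y - w / (‖w‖:ℂ)‖ ≤ 2 := by
      calc ‖y - w / (‖w‖:ℂ)‖ ≤ ‖y‖ + ‖w / (‖w‖:ℂ)‖ := norm_sub_le _ _
        _ = 2 := by rw [hy, hwstar]; norm_num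
    linarith
  -- key: ‖w‖ * ‖z* - w*‖ ≤ 2 ‖z - w‖
  have key : ‖w‖ * ‖z / (‖z‖:ℂ) - w / (‖w‖:ℂ)‖ ≤ 2 * ‖z - w‖ := by
    have hdz : z / (‖z‖:ℂ) * (‖z‖:ℂ) = z := div_mul_cancel₀ z hzc
    have hdw : w / (‖w‖:ℂ) * (‖w‖:ℂ) = w := div_mul_cancel₀ w hwc
    have e : (z / (‖z‖:ℂ) - w / (‖w‖:ℂ)) * ((‖z‖:ℂ) * (‖w‖:ℂ))
        = z * ((‖w‖:ℂ) - (‖z‖:ℂ)) + (z - w) * (‖z‖:ℂ) := by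
      calc (z / (‖z‖:ℂ) - w / (‖w‖:ℂ)) * ((‖z‖:ℂ) * (‖w‖:ℂ))
          = (z / (‖z‖:ℂ) * (‖z‖:ℂ)) * (‖w‖:ℂ) - (w / (‖w‖:ℂ) * (‖w‖:ℂ)) * (‖z‖:ℂ) := by ring
        _ = z * (‖w‖:ℂ) - w * (‖z‖:ℂ) := by rw [hdz, hdw]
        _ = _ := by ring
    have hnorm : ‖z / (‖z‖:ℂ) - w / (‖w‖:ℂ)‖ * (‖z‖ * ‖w‖)
        = ‖z * ((‖w‖:ℂ) - (‖z‖:ℂ)) + (z - w) * (‖z‖:ℂ)‖ := by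
      have := congrArg norm e
      rwa [norm_mul, norm_mul, hcnz, hcnw] at this
    have habs : ‖((‖w‖:ℂ) - (‖z‖:ℂ))‖ = |‖w‖ - ‖z‖| := by
      rw [show ((‖w‖:ℂ) - (‖z‖:ℂ)) = ((‖w‖ - ‖z‖ : ℝ) : ℂ) by push_cast; ring,
        Complex.norm_real, Real.norm_eq_abs]
    have h2 : |‖w‖ - ‖z‖| ≤ ‖z - w‖ := by
      rw [norm_sub_rev]; exact abs_norm_sub_norm_le w z
    have htri : ‖z * ((‖w‖:ℂ) - (‖z‖:ℂ)) + (z - w) * (‖z‖:ℂ)‖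
        ≤ ‖z‖ * ‖z - w‖ + ‖z - w‖ * ‖z‖ := by
      calc ‖z * ((‖w‖:ℂ) - (‖z‖:ℂ)) + (z - w) * (‖z‖:ℂ)‖
          ≤ ‖z * ((‖w‖:ℂ) - (‖z‖:ℂ))‖ + ‖(z - w) * (‖z‖:ℂ)‖ := norm_add_le _ _
        _ = ‖z‖ * |‖w‖ - ‖z‖| + ‖z - w‖ * ‖z‖ := by
            rw [norm_mul, norm_mul, habs, hcnz]
        _ ≤ ‖z‖ * ‖z - w‖ + ‖z - w‖ * ‖z‖ := by nlinarith
    have h3 : ‖w‖ * ‖z / (‖z‖:ℂ) - w / (‖w‖:ℂ)‖ * ‖z‖ ≤ 2 * ‖z - w‖ * ‖z‖ := by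
      nlinarith
    exact le_of_mul_le_mul_right h3 hzpos
  -- ‖z* - w*‖ ≥ 4(1-‖w‖) - 2(1-‖z‖)
  have hsep : 4 * (1 - ‖w‖) - 2 * (1 - ‖z‖) ≤ ‖z / (‖z‖:ℂ) - w / (‖w‖:ℂ)‖ := by
    have h1 : ‖y - w / (‖w‖:ℂ)‖ ≤ ‖y - z / (‖z‖:ℂ)‖ + ‖z / (‖z‖:ℂ) - w / (‖w‖:ℂ)‖ := by
      calc ‖y - w / (‖w‖:ℂ)‖
          = ‖(y - z / (‖z‖:ℂ)) + (z / (‖z‖:ℂ) - w / (‖w‖:ℂ))‖ := by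
            rw [show y - w / (‖w‖:ℂ)
              = (y - z / (‖z‖:ℂ)) + (z / (‖z‖:ℂ) - w / (‖w‖:ℂ)) by ring]
        _ ≤ _ := norm_add_le _ _
    linarith
  -- ‖z - w‖ ≥ ‖w‖ - ‖z‖
  have hd1 : ‖w‖ - ‖z‖ ≤ ‖z - w‖ := by
    have := norm_sub_norm_le w z
    rw [norm_sub_rev] at this
    linarith
  -- ‖z - w‖ ≥ (1-‖w‖) - (1-‖z‖)/2
  have hd2 : (1 - ‖w‖) - (1 - ‖z‖)/2 ≤ ‖z - w‖ := by
    nlinarith [norm_nonneg (z / (‖z‖:ℂ) - w / (‖w‖:ℂ))]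
  -- ‖z - w‖ ≥ (1-‖w‖)/3
  have hzw3 : (1 - ‖w‖)/3 ≤ ‖z - w‖ := by linarith
  have hbpos : (0:ℝ) < 1 - ‖w‖ := by linarith
  -- ‖z - w*‖ ≤ 4 ‖z - w‖
  have hup : ‖z - w / (‖w‖:ℂ)‖ ≤ 4 * ‖z - w‖ := by
    have h1 : ‖z - w / (‖w‖:ℂ)‖ ≤ ‖z - w‖ + ‖w - w / (‖w‖:ℂ)‖ := by
      calc ‖z - w / (‖w‖:ℂ)‖ = ‖(z - w) + (w - w / (‖w‖:ℂ))‖ := by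
            rw [show z - w / (‖w‖:ℂ) = (z - w) + (w - w / (‖w‖:ℂ)) by ring]
        _ ≤ _ := norm_add_le _ _
    rw [hwb] at h1
    linarith
  constructor
  · linarith
  · -- second part
    have hE : 1 - ‖w‖ ≤ ‖z - w / (‖w‖:ℂ)‖ := by
      have h1 : ‖y - w / (‖w‖:ℂ)‖
          ≤ ‖y - z / (‖z‖:ℂ)‖ + ‖z / (‖z‖:ℂ) - z‖ + ‖z - w / (‖w‖:ℂ)‖ := by
        calc ‖y - w / (‖w‖:ℂ)‖
            = ‖(y - z / (‖z‖:ℂ)) + (z / (‖z‖:ℂ) - z) + (z - w / (‖w‖:ℂ))‖ := by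
              rw [show y - w / (‖w‖:ℂ)
                = (y - z / (‖z‖:ℂ)) + (z / (‖z‖:ℂ) - z) + (z - w / (‖w‖:ℂ)) by ring]
          _ ≤ _ := norm_add₃_le
      rw [norm_sub_rev (z / (‖z‖:ℂ)) z, hza] at h1
      have h2 : 1 - ‖z‖ ≤ ‖z - w / (‖w‖:ℂ)‖ := by
        have := norm_sub_norm_le (w / (‖w‖:ℂ)) z
        rw [norm_sub_rev, hwstar] at this
        linarith
      linarith
    have hEpos : (0:ℝ) < ‖z - w / (‖w‖:ℂ)‖ := lt_of_lt_of_le hbpos hE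
    have hA : (0:ℝ) ≤ 1 - ‖z‖ ^ 2 := by nlinarith
    have hD2 : ‖z - w / (‖w‖:ℂ)‖ ^ 2 / 16 ≤ ‖z - w‖ ^ 2 := by
      have h := pow_le_pow_left₀ (norm_nonneg (z - w / (‖w‖:ℂ))) hup 2
      have h4 : (4 * ‖z - w‖) ^ 2 = 16 * ‖z - w‖ ^ 2 := by ring
      rw [h4] at h
      linarith
    have hnum : (1 - ‖z‖ ^ 2) * (1 - ‖w‖ ^ 2) ≤ (1 - ‖z‖ ^ 2) * (2 * (1 - ‖w‖)) := by
      nlinarith [sq_nonneg (1 - ‖w‖)]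
    calc (1 - ‖z‖ ^ 2) * (1 - ‖w‖ ^ 2) / ‖z - w‖ ^ 2
        ≤ (1 - ‖z‖ ^ 2) * (2 * (1 - ‖w‖)) / (‖z - w / (‖w‖:ℂ)‖ ^ 2 / 16) :=
          div_le_div₀ (by positivity) hnum (by positivity) hD2
      _ = 32 * ((1 - ‖z‖ ^ 2) * (1 - ‖w‖) / ‖z - w / (‖w‖:ℂ)‖ ^ 2) := by
          rw [div_div_eq_mul_div,
            show (1 - ‖z‖ ^ 2) * (2 * (1 - ‖w‖)) * 16
              = 32 * ((1 - ‖z‖ ^ 2) * (1 - ‖w‖)) by ring,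
            mul_div_assoc]
end
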